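/- Let G = [[G₁₁, G₁₂],[G₁₂ᵀ, G₂₂]] be an invertible symmetric block matrix with G₂₂ invertible and F := G₁₁ − G₁₂G₂₂⁻¹G₁₂ᵀ invertible. Let A_α (q×n_x), B_α (q×n_y) be matrices with U_α := B_αG₂₂⁻¹B_αᵀ invertible, set W_α = A_α − B_αG₂₂⁻¹G₁₂ᵀ, assume Γ_α := F + W_αᵀU_α⁻¹W_α is invertible, let N_α = [A_α B_α]ᵀ with N_αᵀG⁻¹N_α invertible, and let H_α = G⁻¹ − G⁻¹N_α(N_αᵀG⁻¹N_α)⁻¹N_αᵀG⁻¹. Define H_α^B = G₂₂⁻¹(I − B_αᵀU_α⁻¹B_αG₂₂⁻¹). Then for any row vectors A_p ∈ ℝ^{1×n_x}, B_p ∈ ℝ^{1×n_y}, setting n_p = (A_pᵀ, B_pᵀ) and W_p = A_p − B_pG₂₂⁻¹G₁₂ᵀ: n_pᵀ H_α n_p = B_p H_α^B B_pᵀ + (W_p − B_pG₂₂⁻¹B_αᵀU_α⁻¹W_α) Γ_α⁻¹ (W_p − B_pG₂₂⁻¹B_αᵀU_α⁻¹W_α)ᵀ. -/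

import Mathlib

open Matrix

/-- Decomposition of the quadratic form `n_pᵀ H_α n_p` in terms of the reduced matrix
`H_α^B` and the Schur-type matrix `Γ_α`:
`n_pᵀ H_α n_p = B_p H_α^B B_pᵀ + (W_p − B_pG₂₂⁻¹B_αᵀU_α⁻¹W_α) Γ_α⁻¹ (…)ᵀ`. -/
theorem stmt_12 {nx ny q : ℕ}
    (G11 : Matrix (Fin nx) (Fin nx) ℝ) (G12 : Matrix (Fin nx) (Fin ny) ℝ)
    (G22 : Matrix (Fin ny) (Fin ny) ℝ)
    (hG11 : G11.IsSymm) (hG22 : G22.IsSymm) (hG22inv : IsUnit G22.det)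
    (G : Matrix (Fin nx ⊕ Fin ny) (Fin nx ⊕ Fin ny) ℝ)
    (hG : G = Matrix.fromBlocks G11 G12 G12ᵀ G22)
    (hGinv : IsUnit G.det)
    (F : Matrix (Fin nx) (Fin nx) ℝ) (hF : F = G11 - G12 * G22⁻¹ * G12ᵀ)
    (hFinv : IsUnit F.det)
    (Aα : Matrix (Fin q) (Fin nx) ℝ) (Bα : Matrix (Fin q) (Fin ny) ℝ)
    (Uα : Matrix (Fin q) (Fin q) ℝ) (hUα : Uα = Bα * G22⁻¹ * Bαᵀ)
    (hUαinv : IsUnit Uα.det)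
    (Wα : Matrix (Fin q) (Fin nx) ℝ) (hWα : Wα = Aα - Bα * G22⁻¹ * G12ᵀ)
    (Γα : Matrix (Fin nx) (Fin nx) ℝ) (hΓα : Γα = F + Wαᵀ * Uα⁻¹ * Wα)
    (hΓαinv : IsUnit Γα.det)
    (Nα : Matrix (Fin nx ⊕ Fin ny) (Fin q) ℝ)
    (hNα : Nα = (Matrix.fromCols Aα Bα)ᵀ)
    (hNGN : IsUnit (Nαᵀ * G⁻¹ * Nα).det)
    (Hα : Matrix (Fin nx ⊕ Fin ny) (Fin nx ⊕ Fin ny) ℝ)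
    (hHα : Hα = G⁻¹ - G⁻¹ * Nα * (Nαᵀ * G⁻¹ * Nα)⁻¹ * Nαᵀ * G⁻¹)
    (HB : Matrix (Fin ny) (Fin ny) ℝ)
    (hHB : HB = G22⁻¹ * (1 - Bαᵀ * Uα⁻¹ * Bα * G22⁻¹))
    (Ap : Fin nx → ℝ) (Bp : Fin ny → ℝ)
    (np : Fin nx ⊕ Fin ny → ℝ) (hnp : np = Sum.elim Ap Bp)
    (Wp : Fin nx → ℝ) (hWp : Wp = Ap - Bp ᵥ* (G22⁻¹ * G12ᵀ))
    (w : Fin nx → ℝ) (hw : w = Wp - Bp ᵥ* (G22⁻¹ * Bαᵀ * Uα⁻¹ * Wα)) :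
    np ⬝ᵥ Hα *ᵥ np = Bp ⬝ᵥ HB *ᵥ Bp + w ⬝ᵥ Γα⁻¹ *ᵥ w := by
  -- basic inverse facts
  have hST : G22 * G22⁻¹ = 1 := Matrix.mul_nonsing_inv _ hG22inv
  have hTS : G22⁻¹ * G22 = 1 := Matrix.nonsing_inv_mul _ hG22inv
  have hFF : F * F⁻¹ = 1 := Matrix.mul_nonsing_inv _ hFinv
  have hFiF : F⁻¹ * F = 1 := Matrix.nonsing_inv_mul _ hFinv
  have hUU : Uα * Uα⁻¹ = 1 := Matrix.mul_nonsing_inv _ hUαinv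
  have hUiU : Uα⁻¹ * Uα = 1 := Matrix.nonsing_inv_mul _ hUαinv
  have hGG : Γα * Γα⁻¹ = 1 := Matrix.mul_nonsing_inv _ hΓαinv
  have hGiG : Γα⁻¹ * Γα = 1 := Matrix.nonsing_inv_mul _ hΓαinv
  have hTt : (G22⁻¹)ᵀ = G22⁻¹ := by rw [Matrix.transpose_nonsing_inv, hG22.eq]
  have hUt : Uαᵀ = Uα := by
    rw [hUα]; simp [Matrix.transpose_mul, Matrix.mul_assoc, hTt]
  have hUit : (Uα⁻¹)ᵀ = Uα⁻¹ := by rw [Matrix.transpose_nonsing_inv, hUt]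
  -- context versions
  have hSTx : ∀ {m : Type} (X : Matrix (Fin ny) m ℝ), G22 * (G22⁻¹ * X) = X := by
    intro m X; rw [← Matrix.mul_assoc, hST, Matrix.one_mul]
  have hTSx : ∀ {m : Type} (X : Matrix (Fin ny) m ℝ), G22⁻¹ * (G22 * X) = X := by
    intro m X; rw [← Matrix.mul_assoc, hTS, Matrix.one_mul]
  have hFFx : ∀ {m : Type} (X : Matrix (Fin nx) m ℝ), F * (F⁻¹ * X) = X := by
    intro m X; rw [← Matrix.mul_assoc, hFF, Matrix.one_mul]
  have hFiFx : ∀ {m : Type} (X : Matrix (Fin nx) m ℝ), F⁻¹ * (F * X) = X := by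
    intro m X; rw [← Matrix.mul_assoc, hFiF, Matrix.one_mul]
  have hUUx : ∀ {m : Type} (X : Matrix (Fin q) m ℝ), Uα * (Uα⁻¹ * X) = X := by
    intro m X; rw [← Matrix.mul_assoc, hUU, Matrix.one_mul]
  have hGGx : ∀ {m : Type} (X : Matrix (Fin nx) m ℝ), Γα * (Γα⁻¹ * X) = X := by
    intro m X; rw [← Matrix.mul_assoc, hGG, Matrix.one_mul]
  have hGiGx : ∀ {m : Type} (X : Matrix (Fin nx) m ℝ), Γα⁻¹ * (Γα * X) = X := by
    intro m X; rw [← Matrix.mul_assoc, hGiG, Matrix.one_mul]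
  have hQ : Wαᵀ * Uα⁻¹ * Wα = Γα - F := by rw [hΓα]; abel
  -- push-through rules
  have hk1x : ∀ {m : Type} (X : Matrix (Fin nx) m ℝ),
      F⁻¹ * (Wαᵀ * (Uα⁻¹ * (Wα * (Γα⁻¹ * X)))) = F⁻¹ * X - Γα⁻¹ * X := by
    intro m X
    calc F⁻¹ * (Wαᵀ * (Uα⁻¹ * (Wα * (Γα⁻¹ * X))))
        = F⁻¹ * ((Wαᵀ * Uα⁻¹ * Wα) * (Γα⁻¹ * X)) := by simp [Matrix.mul_assoc]
      _ = F⁻¹ * (Γα * (Γα⁻¹ * X)) - F⁻¹ * (F * (Γα⁻¹ * X)) := by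
          rw [hQ]; simp [Matrix.sub_mul, Matrix.mul_sub]
      _ = F⁻¹ * X - Γα⁻¹ * X := by rw [hGGx, hFiFx]
  have hk2x : ∀ {m : Type} (X : Matrix (Fin nx) m ℝ),
      Γα⁻¹ * (Wαᵀ * (Uα⁻¹ * (Wα * (F⁻¹ * X)))) = F⁻¹ * X - Γα⁻¹ * X := by
    intro m X
    calc Γα⁻¹ * (Wαᵀ * (Uα⁻¹ * (Wα * (F⁻¹ * X))))
        = Γα⁻¹ * ((Wαᵀ * Uα⁻¹ * Wα) * (F⁻¹ * X)) := by simp [Matrix.mul_assoc]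
      _ = Γα⁻¹ * (Γα * (F⁻¹ * X)) - Γα⁻¹ * (F * (F⁻¹ * X)) := by
          rw [hQ]; simp [Matrix.sub_mul, Matrix.mul_sub]
      _ = F⁻¹ * X - Γα⁻¹ * X := by rw [hGiGx, hFFx]
  -- explicit inverse of G
  have hG11e : G11 = F + G12 * G22⁻¹ * G12ᵀ := by rw [hF]; abel
  have hGinvEq : G⁻¹ = Matrix.fromBlocks
      F⁻¹ (-(F⁻¹ * (G12 * G22⁻¹)))
      (-(G22⁻¹ * (G12ᵀ * F⁻¹))) (G22⁻¹ + G22⁻¹ * (G12ᵀ * (F⁻¹ * (G12 * G22⁻¹)))) := by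
    apply Matrix.inv_eq_right_inv
    rw [hG, Matrix.fromBlocks_multiply]
    have c11 : G11 * F⁻¹ + G12 * -(G22⁻¹ * (G12ᵀ * F⁻¹)) = 1 := by
      rw [hG11e]
      simp only [Matrix.add_mul, Matrix.mul_neg, Matrix.mul_assoc, hFF]
      abel
    have c12 : G11 * -(F⁻¹ * (G12 * G22⁻¹)) +
        G12 * (G22⁻¹ + G22⁻¹ * (G12ᵀ * (F⁻¹ * (G12 * G22⁻¹)))) = 0 := by
      rw [hG11e]
      simp only [Matrix.add_mul, Matrix.mul_neg, Matrix.mul_add, Matrix.mul_assoc, hFFx]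
      abel
    have c21 : G12ᵀ * F⁻¹ + G22 * -(G22⁻¹ * (G12ᵀ * F⁻¹)) = 0 := by
      simp only [Matrix.mul_neg, hSTx]
      abel
    have c22 : G12ᵀ * -(F⁻¹ * (G12 * G22⁻¹)) +
        G22 * (G22⁻¹ + G22⁻¹ * (G12ᵀ * (F⁻¹ * (G12 * G22⁻¹)))) = 1 := by
      simp only [Matrix.mul_neg, Matrix.mul_add, hSTx, hST]
      abel
    rw [c11, c12, c21, c22, Matrix.fromBlocks_one]
  -- transpose of Wα
  have hWαt : Wαᵀ = Aαᵀ - G12 * (G22⁻¹ * Bαᵀ) := by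
    rw [hWα]; simp [Matrix.transpose_sub, Matrix.transpose_mul, Matrix.mul_assoc, hTt]
  -- reduce the scalar goal to a 1×1 matrix identity
  have bridge : ∀ {n : Type} [Fintype n] (u : n → ℝ) (M : Matrix n n ℝ) (v : n → ℝ),
      u ⬝ᵥ M *ᵥ v = (Matrix.replicateRow Unit u * M * Matrix.replicateCol Unit v) () () := by
    intro n _ u M v
    rw [Matrix.mul_assoc, ← Matrix.replicateCol_mulVec, Matrix.replicateRow_mul_replicateCol_apply]
  rw [bridge, bridge, bridge]
  have row_sub : ∀ {n : Type} (u v : n → ℝ),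
      Matrix.replicateRow Unit (u - v) = Matrix.replicateRow Unit u - Matrix.replicateRow Unit v := by
    intro n u v; ext i j; simp [Matrix.replicateRow_apply]
  have hrow_np : Matrix.replicateRow Unit np
      = Matrix.fromCols (Matrix.replicateRow Unit Ap) (Matrix.replicateRow Unit Bp) := by
    rw [hnp]; ext i (j | j) <;> simp [Matrix.fromCols]
  have hrow_w : Matrix.replicateRow Unit w =
      (Matrix.replicateRow Unit Ap - Matrix.replicateRow Unit Bp * (G22⁻¹ * G12ᵀ)) -
        Matrix.replicateRow Unit Bp * (G22⁻¹ * Bαᵀ * Uα⁻¹ * Wα) := by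
    rw [hw, row_sub, hWp, row_sub, Matrix.replicateRow_vecMul, Matrix.replicateRow_vecMul]
  rw [← Matrix.transpose_replicateRow np, ← Matrix.transpose_replicateRow Bp, ← Matrix.transpose_replicateRow w,
    hrow_np, hrow_w]
  set p1 := Matrix.replicateRow Unit Ap with hp1
  set p2 := Matrix.replicateRow Unit Bp with hp2
  -- block computations
  have h1 : Matrix.fromCols p1 p2 * G⁻¹ * (Matrix.fromCols p1 p2)ᵀ =
      (p1 - p2 * (G22⁻¹ * G12ᵀ)) * (F⁻¹ * (p1ᵀ - G12 * (G22⁻¹ * p2ᵀ)))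
        + p2 * (G22⁻¹ * p2ᵀ) := by
    rw [hGinvEq, Matrix.transpose_fromCols, Matrix.fromCols_mul_fromBlocks,
      Matrix.fromCols_mul_fromRows]
    simp only [Matrix.mul_add, Matrix.add_mul, Matrix.mul_sub, Matrix.sub_mul,
      Matrix.neg_mul, Matrix.mul_neg, Matrix.mul_assoc]
    abel
  have h2 : Matrix.fromCols p1 p2 * G⁻¹ * Nα =
      (p1 - p2 * (G22⁻¹ * G12ᵀ)) * (F⁻¹ * Wαᵀ) + p2 * (G22⁻¹ * Bαᵀ) := by
    rw [hNα, Matrix.transpose_fromCols, hGinvEq, Matrix.fromCols_mul_fromBlocks,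
      Matrix.fromCols_mul_fromRows, hWαt]
    simp only [Matrix.mul_add, Matrix.add_mul, Matrix.mul_sub, Matrix.sub_mul,
      Matrix.neg_mul, Matrix.mul_neg, Matrix.mul_assoc]
    abel
  have h3 : Nαᵀ * G⁻¹ * (Matrix.fromCols p1 p2)ᵀ =
      Wα * (F⁻¹ * (p1ᵀ - G12 * (G22⁻¹ * p2ᵀ))) + Bα * (G22⁻¹ * p2ᵀ) := by
    rw [hNα, Matrix.transpose_transpose, hGinvEq, Matrix.transpose_fromCols,
      Matrix.fromCols_mul_fromBlocks, Matrix.fromCols_mul_fromRows, hWα]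
    simp only [Matrix.mul_add, Matrix.add_mul, Matrix.mul_sub, Matrix.sub_mul,
      Matrix.neg_mul, Matrix.mul_neg, Matrix.mul_assoc]
    abel
  have hZ : Nαᵀ * G⁻¹ * Nα = Uα + Wα * (F⁻¹ * Wαᵀ) := by
    rw [hNα, Matrix.transpose_transpose, Matrix.transpose_fromCols, hGinvEq,
      Matrix.fromCols_mul_fromBlocks, Matrix.fromCols_mul_fromRows,
      hUα, hWαt, hWα]
    simp only [Matrix.mul_add, Matrix.add_mul, Matrix.mul_sub, Matrix.sub_mul,
      Matrix.neg_mul, Matrix.mul_neg, Matrix.mul_assoc]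
    abel
  have hZinv : (Nαᵀ * G⁻¹ * Nα)⁻¹ =
      Uα⁻¹ - Uα⁻¹ * (Wα * (Γα⁻¹ * (Wαᵀ * Uα⁻¹))) := by
    apply Matrix.inv_eq_right_inv
    rw [hZ]
    simp only [Matrix.mul_add, Matrix.add_mul, Matrix.mul_sub, Matrix.sub_mul,
      Matrix.mul_assoc, hUU, hUUx, hk1x, Matrix.mul_one, Matrix.one_mul]
    abel
  -- assemble
  have key : Matrix.fromCols p1 p2 * Hα * (Matrix.fromCols p1 p2)ᵀ =
      (Matrix.fromCols p1 p2 * G⁻¹ * (Matrix.fromCols p1 p2)ᵀ) -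
        (Matrix.fromCols p1 p2 * G⁻¹ * Nα) *
          ((Nαᵀ * G⁻¹ * Nα)⁻¹ * (Nαᵀ * G⁻¹ * (Matrix.fromCols p1 p2)ᵀ)) := by
    rw [hHα]
    simp only [Matrix.mul_sub, Matrix.sub_mul, Matrix.mul_assoc]
  have Meq : Matrix.fromCols p1 p2 * Hα * (Matrix.fromCols p1 p2)ᵀ =
      p2 * HB * p2ᵀ +
        ((p1 - p2 * (G22⁻¹ * G12ᵀ)) - p2 * (G22⁻¹ * Bαᵀ * Uα⁻¹ * Wα)) * Γα⁻¹ *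
          ((p1 - p2 * (G22⁻¹ * G12ᵀ)) - p2 * (G22⁻¹ * Bαᵀ * Uα⁻¹ * Wα))ᵀ := by
    rw [key, h1, h2, h3, hZinv, hHB]
    simp only [Matrix.transpose_sub, Matrix.transpose_mul, Matrix.transpose_transpose,
      hTt, hUit]
    simp only [Matrix.mul_add, Matrix.add_mul, Matrix.mul_sub, Matrix.sub_mul,
      Matrix.neg_mul, Matrix.mul_neg, Matrix.mul_assoc, Matrix.mul_one, Matrix.one_mul,
      hk1x, hk2x]
    abel
  rw [Meq]
  simp [Matrix.add_apply]
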